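/- arXiv:1905.09801 — 3 statements merged into one kernel-verified Lean document; each statement's English description precedes it below -/
import Mathlib

section
/- Let G be a graph on n vertices, let 0 < ψ < 1/3, and let S ⊆ V(G). If every vertex in S has degree at least (2/3 − ψ)·n in G, then there are at least (1/3 + √ψ/10)·n vertices of G each having at least (1/2 − √ψ)·|S| neighbours in S. -/
theorem stmt_0 {V : Type*} [Fintype V] [DecidableEq V] (G : SimpleGraph V) [DecidableRel G.Adj]
    (ψ : ℝ) (hψ0 : 0 < ψ) (hψ : ψ < 1/3) (S : Finset V)
    (hdeg : ∀ v ∈ S, (2/3 - ψ) * (Fintype.card V : ℝ) ≤ (G.degree v : ℝ)) :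
    (1/3 + Real.sqrt ψ / 10) * (Fintype.card V : ℝ) ≤
      (({v : V | (1/2 - Real.sqrt ψ) * (S.card : ℝ) ≤
          ((G.neighborFinset v ∩ S).card : ℝ)}.ncard : ℝ)) := by
  classical
  set q : ℝ := Real.sqrt ψ with hqdef
  have hq0 : 0 < q := Real.sqrt_pos.mpr hψ0
  have hq2 : q ^ 2 = ψ := Real.sq_sqrt hψ0.le
  have hq1 : q < 1 := by nlinarith
  set n : ℝ := (Fintype.card V : ℝ) with hn
  have hn0 : (0:ℝ) ≤ n := Nat.cast_nonneg _
  set P : V → Prop := fun v => (1/2 - q) * (S.card : ℝ) ≤ ((G.neighborFinset v ∩ S).card : ℝ)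
    with hP
  have hset : {v : V | (1/2 - Real.sqrt ψ) * (S.card : ℝ) ≤
      ((G.neighborFinset v ∩ S).card : ℝ)} = ↑(Finset.univ.filter P) := by
    ext v; simp [P, hqdef]
  rw [hset, Set.ncard_coe_finset]
  set T := Finset.univ.filter P with hT
  by_cases hs : (1/2 - q) * (S.card : ℝ) ≤ 0
  · have hTu : T = Finset.univ := by
      apply Finset.eq_univ_of_forall
      intro v
      simp only [hT, Finset.mem_filter, Finset.mem_univ, true_and, hP]
      exact hs.trans (Nat.cast_nonneg _)
    rw [hTu, Finset.card_univ]
    nlinarith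
  · push_neg at hs
    have hscard0 : (0:ℝ) < (S.card : ℝ) := by
      rcases lt_or_eq_of_le (Nat.cast_nonneg (α := ℝ) S.card) with h | h
      · exact h
      · exfalso; rw [← h] at hs; simp at hs
    have hqhalf : q < 1/2 := by
      by_contra hc
      push_neg at hc
      have : (1/2 - q) * (S.card : ℝ) ≤ 0 :=
        mul_nonpos_of_nonpos_of_nonneg (by linarith) (Nat.cast_nonneg _)
      linarith
    -- double counting
    have keyN : ∑ v : V, (G.neighborFinset v ∩ S).card = ∑ u ∈ S, G.degree u := by
      have h1 : ∀ v : V, (G.neighborFinset v ∩ S) = S.filter (fun u => G.Adj v u) := by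
        intro v; ext u
        simp [Finset.mem_inter, Finset.mem_filter, and_comm]
      simp_rw [h1, Finset.card_filter]
      rw [Finset.sum_comm]
      refine Finset.sum_congr rfl fun u _ => ?_
      rw [← Finset.card_filter]
      have h2 : Finset.univ.filter (fun v => G.Adj v u) = G.neighborFinset u := by
        ext v; simp [G.adj_comm]
      rw [h2]
      rfl
    have key : ∑ v : V, ((G.neighborFinset v ∩ S).card : ℝ) = ∑ u ∈ S, (G.degree u : ℝ) := by
      exact_mod_cast congrArg (Nat.cast (R := ℝ)) keyN
    have hlow : (2/3 - ψ) * n * (S.card : ℝ) ≤ ∑ v : V, ((G.neighborFinset v ∩ S).card : ℝ) := by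
      rw [key]
      calc (2/3 - ψ) * n * (S.card : ℝ) = ∑ _u ∈ S, (2/3 - ψ) * n := by
            rw [Finset.sum_const, nsmul_eq_mul]; ring
        _ ≤ ∑ u ∈ S, (G.degree u : ℝ) := Finset.sum_le_sum fun u hu => hdeg u hu
    set M := Finset.univ.filter (fun v => ¬ P v) with hM
    have hsplit : ∑ v : V, ((G.neighborFinset v ∩ S).card : ℝ) =
        ∑ v ∈ T, ((G.neighborFinset v ∩ S).card : ℝ) +
        ∑ v ∈ M, ((G.neighborFinset v ∩ S).card : ℝ) :=
      (Finset.sum_filter_add_sum_filter_not _ _ _).symm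
    have hub1 : ∑ v ∈ T, ((G.neighborFinset v ∩ S).card : ℝ) ≤ (T.card : ℝ) * (S.card : ℝ) := by
      calc ∑ v ∈ T, ((G.neighborFinset v ∩ S).card : ℝ) ≤ ∑ _v ∈ T, (S.card : ℝ) :=
            Finset.sum_le_sum fun v _ => by
              exact_mod_cast Nat.cast_le.mpr (Finset.card_le_card Finset.inter_subset_right)
        _ = (T.card : ℝ) * (S.card : ℝ) := by rw [Finset.sum_const, nsmul_eq_mul]
    have hub2 : ∑ v ∈ M, ((G.neighborFinset v ∩ S).card : ℝ) ≤
        (M.card : ℝ) * ((1/2 - q) * (S.card : ℝ)) := by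
      calc ∑ v ∈ M, ((G.neighborFinset v ∩ S).card : ℝ)
          ≤ ∑ _v ∈ M, (1/2 - q) * (S.card : ℝ) := by
            refine Finset.sum_le_sum fun v hv => ?_
            have : ¬ P v := (Finset.mem_filter.mp hv).2
            simp only [hP, not_le] at this
            exact this.le
        _ = (M.card : ℝ) * ((1/2 - q) * (S.card : ℝ)) := by rw [Finset.sum_const, nsmul_eq_mul]
    have hcards : (T.card : ℝ) + (M.card : ℝ) = n := by
      rw [hn]
      exact_mod_cast congrArg (Nat.cast (R := ℝ))
        (Finset.card_filter_add_card_filter_not (s := Finset.univ) (p := P))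
    have ht0 : (0:ℝ) ≤ (T.card : ℝ) := Nat.cast_nonneg _
    have hm0 : (0:ℝ) ≤ (M.card : ℝ) := Nat.cast_nonneg _
    have hmain : (2/3 - ψ) * n * (S.card : ℝ) ≤
        (T.card : ℝ) * (S.card : ℝ) + (M.card : ℝ) * ((1/2 - q) * (S.card : ℝ)) := by
      rw [hsplit] at hlow
      linarith
    have hdiv : (2/3 - ψ) * n ≤ (T.card : ℝ) + (M.card : ℝ) * (1/2 - q) := by
      have := (mul_le_mul_iff_of_pos_right hscard0).mp
        (by linarith [hmain] :
          ((2/3 - ψ) * n) * (S.card : ℝ) ≤ ((T.card : ℝ) + (M.card : ℝ) * (1/2 - q)) * (S.card : ℝ))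
      exact this
    have hpos : (0:ℝ) ≤ n * q * (37/60 - 11/10 * q) :=
      mul_nonneg (mul_nonneg hn0 hq0.le) (by linarith)
    nlinarith [hdiv, hcards, hpos, hq2, hq0, hn0, ht0, hm0]
end

section
/- Let G be a graph on m+1 vertices with minimum degree at least ⌊2m/3⌋ and a universal vertex v*. Let T be a tree with m edges that has a vertex t adjacent to a set L of at least ⌈m/3⌉ leaves. Then G contains T as a spanning subgraph; moreover there is an embedding mapping t to v*. -/
theorem stmt_7 {V W : Type*} [Fintype V] (m : ℕ)
    (G : SimpleGraph V) [DecidableRel G.Adj]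
    (hcard : Fintype.card V = m + 1)
    (hmin : 2 * m / 3 ≤ G.minDegree)
    (vstar : V) (huniv : ∀ u : V, u ≠ vstar → G.Adj vstar u)
    [Fintype W] (T : SimpleGraph W) [DecidableRel T.Adj] [Fintype T.edgeSet]
    (hT : T.IsTree) (hm : T.edgeFinset.card = m)
    (t : W) (L : Finset W)
    (hL : ∀ l ∈ L, T.Adj t l ∧ T.degree l = 1)
    (hLcard : (m + 2) / 3 ≤ L.card) :
    ∃ f : T →g G, Function.Injective f ∧ f t = vstar := by
  classical
  have hWcard : Fintype.card W = m + 1 := by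
    have := hT.card_edgeFinset
    omega
  have htL : t ∉ L := fun h => T.loopless.irrefl t (hL t h).1
  -- the unique path to t
  have hexu : ∀ v : W, ∃ p : T.Walk v t, p.IsPath ∧ ∀ q : T.Walk v t, q.IsPath → q = p := by
    intro v
    obtain ⟨p, hp, hu⟩ := hT.existsUnique_path v t
    exact ⟨p, hp, hu⟩
  choose pw hpwP hpwU using hexu
  -- parent is the second vertex on the path to t
  have hpar : ∀ w : W, w ≠ t →
      T.Adj w ((pw w).getVert 1) ∧ (pw ((pw w).getVert 1)).length + 1 = (pw w).length := by
    intro w hw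
    have hnil : ¬ (pw w).Nil := SimpleGraph.Walk.not_nil_of_ne hw
    have hadj : T.Adj w ((pw w).getVert 1) := (pw w).adj_snd hnil
    refine ⟨hadj, ?_⟩
    have htail : (pw w).tail.IsPath := (hpwP w).tail
    have := hpwU ((pw w).getVert 1) (pw w).tail htail
    rw [← this]
    exact SimpleGraph.Walk.length_tail_add_one hnil
  -- key: a neighbor of w is either its parent, or w is the neighbor's parent
  have hkey : ∀ w b : W, w ≠ t → T.Adj w b →
      (pw w).getVert 1 = b ∨ (b ≠ t ∧ (pw b).getVert 1 = w) := by
    intro w b hw hwb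
    by_cases hb : b = t
    · left
      rw [hb]
      have hwt' : T.Adj w t := hb ▸ hwb
      have hpath : (SimpleGraph.Walk.cons hwt' SimpleGraph.Walk.nil : T.Walk w t).IsPath :=
        SimpleGraph.Walk.IsPath.nil.cons (by simpa using hwt'.ne)
      rw [← hpwU w _ hpath]
      simp
    · by_cases hmem : w ∈ (pw b).support
      · right
        refine ⟨hb, ?_⟩
        have h1 : ((pw b).takeUntil w hmem).IsPath := (hpwP b).takeUntil hmem
        have h2 : (SimpleGraph.Walk.cons hwb.symm SimpleGraph.Walk.nil : T.Walk b w).IsPath :=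
          SimpleGraph.Walk.IsPath.nil.cons (by simpa using hwb.ne.symm)
        have htk := (hT.existsUnique_path b w).unique h1 h2
        have hsp := ((pw b).take_spec hmem).symm
        rw [htk] at hsp
        rw [hsp]
        simp
      · left
        have hpath : (SimpleGraph.Walk.cons hwb (pw b)).IsPath := (hpwP b).cons hmem
        have he := hpwU w _ hpath
        rw [← he]
        simp
  -- leaves in L have t as their unique neighbor
  have hleaf : ∀ l ∈ L, ∀ x, T.Adj l x → x = t := by
    intro l hl x hx
    obtain ⟨hadjt, hdeg⟩ := hL l hl
    have h1 : (T.neighborFinset l).card = 1 := hdeg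
    obtain ⟨y, hy⟩ := Finset.card_eq_one.mp h1
    have hxy : x ∈ T.neighborFinset l := by simpa using hx
    have hty : t ∈ T.neighborFinset l := by simpa using hadjt.symm
    rw [hy, Finset.mem_singleton] at hxy hty
    rw [hxy, hty]
  set A : Finset W := Lᶜ with hA
  have htA : t ∈ A := by simpa [hA] using htL
  have hAcard : A.card + L.card = m + 1 := by
    have h1 : A.card = Fintype.card W - L.card := by
      rw [hA, Finset.card_compl]
    have h2 : L.card ≤ Fintype.card W := Finset.card_le_univ L
    omega
  -- phase 1: greedy embedding of the non-leaf part
  have hrec : ∀ n : ℕ, ∀ S : Finset W, ∀ f : W → V,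
      t ∈ S → S ⊆ A →
      (∀ b ∈ S, b ≠ t → (pw b).getVert 1 ∈ S) →
      Set.InjOn f ↑S → f t = vstar →
      (∀ a ∈ S, ∀ b ∈ S, T.Adj a b → G.Adj (f a) (f b)) →
      A.card = S.card + n →
      ∃ g : W → V, g t = vstar ∧ Set.InjOn g ↑A ∧
        (∀ a ∈ A, ∀ b ∈ A, T.Adj a b → G.Adj (g a) (g b)) := by
    intro n
    induction n with
    | zero =>
      intro S f h1 h2 h3 h4 h5 h6 h7
      have hSA : S = A := Finset.eq_of_subset_of_card_le h2 (by omega)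
      subst hSA
      exact ⟨f, h5, h4, h6⟩
    | succ n ih =>
      intro S f h1 h2 h3 h4 h5 h6 h7
      have hne : (A \ S).Nonempty := by
        rw [← Finset.card_pos, Finset.card_sdiff_of_subset h2]
        omega
      obtain ⟨w, hwAS, hwmin⟩ := Finset.exists_min_image (A \ S) (fun w => (pw w).length) hne
      obtain ⟨hwA, hwS⟩ := Finset.mem_sdiff.mp hwAS
      have hwt : w ≠ t := fun h => hwS (h ▸ h1)
      obtain ⟨hadj, hlen⟩ := hpar w hwt
      set p : W := (pw w).getVert 1 with hpdef
      have hpA : p ∈ A := by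
        by_contra h
        have hpL : p ∈ L := by simpa [hA] using h
        exact hwt (hleaf p hpL w hadj.symm)
      have hpS : p ∈ S := by
        by_contra h
        have := hwmin p (Finset.mem_sdiff.mpr ⟨hpA, h⟩)
        omega
      -- pick a fresh neighbor of f p
      have hfpI : f p ∈ S.image f := Finset.mem_image_of_mem f hpS
      have himg : (S.image f).card = S.card := Finset.card_image_of_injOn h4
      have hfpnb : f p ∉ G.neighborFinset (f p) := by simp
      have hsub : G.neighborFinset (f p) \ (S.image f) =
          G.neighborFinset (f p) \ ((S.image f).erase (f p)) := by
        ext x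
        simp only [Finset.mem_sdiff, Finset.mem_erase, not_and, ne_eq,
          SimpleGraph.mem_neighborFinset]
        constructor
        · rintro ⟨hx1, hx2⟩
          exact ⟨hx1, fun _ => hx2⟩
        · rintro ⟨hx1, hx2⟩
          exact ⟨hx1, fun hximg => hx2 (fun he => G.loopless.irrefl _ (he ▸ hx1)) hximg⟩
      have hdeg : 2 * m / 3 ≤ (G.neighborFinset (f p)).card := by
        have := G.minDegree_le_degree (f p)
        have hd : G.degree (f p) = (G.neighborFinset (f p)).card := rfl
        omega
      have hcount : ((G.neighborFinset (f p)) \ (S.image f)).Nonempty := by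
        rw [← Finset.card_pos, hsub]
        have h9 := Finset.card_le_card_sdiff_add_card (s := G.neighborFinset (f p))
          (t := (S.image f).erase (f p))
        have h10 : ((S.image f).erase (f p)).card = S.card - 1 := by
          rw [Finset.card_erase_of_mem hfpI, himg]
        have hScard : 1 ≤ S.card := Finset.card_pos.mpr ⟨t, h1⟩
        omega
      obtain ⟨v, hv⟩ := hcount
      rw [Finset.mem_sdiff, SimpleGraph.mem_neighborFinset] at hv
      obtain ⟨hvadj, hvnew⟩ := hv
      -- extend f
      have hneW : ∀ x ∈ S, x ≠ w := fun x hx h => hwS (h ▸ hx)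
      refine ih (insert w S) (Function.update f w v) (Finset.mem_insert_of_mem h1)
        (Finset.insert_subset hwA h2) ?_ ?_ ?_ ?_ ?_
      · intro b hb hbt
        rcases Finset.mem_insert.mp hb with rfl | hbS
        · exact Finset.mem_insert_of_mem hpS
        · exact Finset.mem_insert_of_mem (h3 b hbS hbt)
      · intro a ha b hb heq
        simp only [Finset.coe_insert, Set.mem_insert_iff, Finset.mem_coe] at ha hb
        rcases ha with rfl | haS <;> rcases hb with rfl | hbS
        · rfl
        · exfalso
          rw [Function.update_self, Function.update_of_ne (hneW b hbS)] at heq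
          exact hvnew (heq ▸ Finset.mem_image_of_mem f hbS)
        · exfalso
          rw [Function.update_self, Function.update_of_ne (hneW a haS)] at heq
          exact hvnew (heq.symm ▸ Finset.mem_image_of_mem f haS)
        · rw [Function.update_of_ne (hneW a haS), Function.update_of_ne (hneW b hbS)] at heq
          exact h4 haS hbS heq
      · rw [Function.update_of_ne (hneW t h1)]
        exact h5
      · intro a ha b hb hab
        rcases Finset.mem_insert.mp ha with rfl | haS <;>
          rcases Finset.mem_insert.mp hb with rfl | hbS
        · exact absurd hab (T.loopless.irrefl _)
        · -- a = w, b ∈ S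
          rw [Function.update_self, Function.update_of_ne (hneW b hbS)]
          rcases hkey _ b hwt hab with hpb | ⟨hbt, hpb⟩
          · have hpb' : p = b := hpdef.trans hpb
            rw [← hpb']
            exact hvadj.symm
          · exact absurd (hpb ▸ h3 b hbS hbt) hwS
        · -- b = w, a ∈ S
          rw [Function.update_self, Function.update_of_ne (hneW a haS)]
          rcases hkey _ a hwt hab.symm with hpb | ⟨hat, hpb⟩
          · have hpb' : p = a := hpdef.trans hpb
            rw [← hpb']
            exact hvadj
          · exact absurd (hpb ▸ h3 a haS hat) hwS
        · rw [Function.update_of_ne (hneW a haS), Function.update_of_ne (hneW b hbS)]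
          exact h6 a haS b hbS hab
      · rw [Finset.card_insert_of_notMem hwS]
        omega
  obtain ⟨g, hgt, hginj, hgedge⟩ := hrec (A.card - 1) {t} (fun _ => vstar)
    (Finset.mem_singleton_self t) (Finset.singleton_subset_iff.mpr htA)
    (by intro b hb hbt; exact absurd (Finset.mem_singleton.mp hb) hbt)
    (by simp [Set.InjOn]) rfl
    (by intro a ha b hb hab
        rw [Finset.mem_singleton] at ha hb
        rw [ha, hb] at hab
        exact absurd hab (T.loopless.irrefl t))
    (by have : 1 ≤ A.card := Finset.card_pos.mpr ⟨t, htA⟩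
        simp only [Finset.card_singleton]
        omega)
  -- phase 2: place the leaves on the remaining vertices
  set I : Finset V := A.image g with hI
  have hIcard : I.card = A.card := Finset.card_image_of_injOn hginj
  have hRcard : Fintype.card ↑L = Fintype.card ↑(Iᶜ : Finset V) := by
    rw [Fintype.card_coe, Fintype.card_coe, Finset.card_compl]
    omega
  let e : ↑L ≃ ↑(Iᶜ : Finset V) := Fintype.equivOfCardEq hRcard
  set F : W → V := fun w => if h : w ∈ L then (e ⟨w, h⟩ : V) else g w with hF
  have hFA : ∀ w ∉ L, F w = g w := by
    intro w hw
    simp [hF, hw]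
  have hFL : ∀ w (h : w ∈ L), F w ∈ (Iᶜ : Finset V) := by
    intro w h
    simp only [hF, dif_pos h]
    exact (e ⟨w, h⟩).2
  have hFt : F t = vstar := by rw [hFA t htL]; exact hgt
  have hvI : vstar ∈ I := by
    rw [hI, ← hgt]
    exact Finset.mem_image_of_mem g htA
  have hmemA : ∀ w, w ∉ L → w ∈ A := by
    intro w hw
    simpa [hA] using hw
  have hFhom : ∀ {a b : W}, T.Adj a b → G.Adj (F a) (F b) := by
    intro a b hab
    by_cases haL : a ∈ L
    · have hbt : b = t := hleaf a haL b hab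
      subst hbt
      rw [hFt]
      have hFa := hFL a haL
      have hne : F a ≠ vstar := by
        intro h
        exact (Finset.mem_compl.mp hFa) (h ▸ hvI)
      exact (huniv (F a) hne).symm
    · by_cases hbL : b ∈ L
      · have hat : a = t := hleaf b hbL a hab.symm
        subst hat
        rw [hFt]
        have hFb := hFL b hbL
        have hne : F b ≠ vstar := by
          intro h
          exact (Finset.mem_compl.mp hFb) (h ▸ hvI)
        exact huniv (F b) hne
      · rw [hFA a haL, hFA b hbL]
        exact hgedge a (hmemA a haL) b (hmemA b hbL) hab
  have hFinj : Function.Injective F := by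
    intro a b heq
    by_cases haL : a ∈ L <;> by_cases hbL : b ∈ L
    · simp only [hF, dif_pos haL, dif_pos hbL] at heq
      have := e.injective (Subtype.coe_injective heq)
      exact congrArg Subtype.val this
    · exfalso
      have h1 := hFL a haL
      rw [heq, hFA b hbL] at h1
      exact (Finset.mem_compl.mp h1) (Finset.mem_image_of_mem g (hmemA b hbL))
    · exfalso
      have h1 := hFL b hbL
      rw [← heq, hFA a haL] at h1
      exact (Finset.mem_compl.mp h1) (Finset.mem_image_of_mem g (hmemA a haL))
    · rw [hFA a haL, hFA b hbL] at heq
      exact hginj (hmemA a haL) (hmemA b hbL) heq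
  exact ⟨⟨F, fun {a b} h => hFhom h⟩, hFinj, hFt⟩
end

section
/- For every tree T on n ≥ 1 vertices, every vertex r of T, and every real k with 1 ≤ k ≤ n, there exists a vertex v of T such that every component of T − v not containing r has at most k vertices, while the components of T − v not containing r together with v contain more than k vertices or v = r. -/
open SimpleGraph

/-- The graph obtained from `T` by deleting the vertex `v` (keeping `v` as an
isolated vertex of the ambient vertex type). -/
def deleteVert {W : Type*} (T : SimpleGraph W) (v : W) : SimpleGraph W :=
  SimpleGraph.fromRel (fun a b => T.Adj a b ∧ a ≠ v ∧ b ≠ v)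

section aux
variable {W : Type*} {T : SimpleGraph W} {v a b x : W}

lemma deleteVert_adj : (deleteVert T v).Adj a b ↔ T.Adj a b ∧ a ≠ v ∧ b ≠ v := by
  constructor
  · rintro ⟨hne, ⟨h, h1, h2⟩ | ⟨h, h1, h2⟩⟩
    · exact ⟨h, h1, h2⟩
    · exact ⟨h.symm, h2, h1⟩
  · rintro ⟨h, h1, h2⟩
    exact ⟨h.ne, Or.inl ⟨h, h1, h2⟩⟩

lemma deleteVert_le : deleteVert T v ≤ T := fun a b h => (deleteVert_adj.mp h).1

lemma not_mem_support_deleteVert (p : (deleteVert T v).Walk a b) (ha : a ≠ v) :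
    v ∉ p.support := by
  induction p with
  | nil => simpa using ha.symm
  | cons h q ih =>
    obtain ⟨-, -, hc⟩ := deleteVert_adj.mp h
    simp only [SimpleGraph.Walk.support_cons, List.mem_cons, not_or]
    exact ⟨ha.symm, ih hc⟩

lemma reach_deleteVert_self : (deleteVert T v).Reachable v x ↔ x = v := by
  constructor
  · rintro ⟨p⟩
    cases p with
    | nil => rfl
    | cons h q => exact absurd (deleteVert_adj.mp h).2.1 (by simp)
  · rintro rfl; rfl

lemma walk_transfer (p : T.Walk a b) (h : v ∉ p.support) :
    (deleteVert T v).Reachable a b := by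
  induction p with
  | nil => rfl
  | cons hadj q ih =>
    simp only [SimpleGraph.Walk.support_cons, List.mem_cons, not_or] at h
    have h1 : _ ≠ v := fun e => h.1 e.symm
    have h2 : _ ≠ v := fun e => h.2 (e ▸ q.start_mem_support)
    exact (SimpleGraph.Adj.reachable (deleteVert_adj.mpr ⟨hadj, h1, h2⟩)).trans (ih h.2)

/-- In a path, the endpoint does not appear in a proper prefix. -/
lemma end_not_mem_takeUntil [DecidableEq W] {p : T.Walk a b} (hp : p.IsPath) (hy : x ∈ p.support)
    (hxb : x ≠ b) : b ∉ (p.takeUntil x hy).support := by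
  intro hb
  have hspec := p.take_spec hy
  have hnd : p.support.Nodup := hp.support_nodup
  rw [← hspec, SimpleGraph.Walk.support_append] at hnd
  have hb2 : b ∈ ((p.dropUntil x hy).support).tail := by
    have hmem := (p.dropUntil x hy).end_mem_support
    rw [(p.dropUntil x hy).support_eq_cons] at hmem
    rcases List.mem_cons.mp hmem with h | h
    · exact absurd h.symm hxb
    · exact h
  exact (List.disjoint_of_nodup_append hnd) hb hb2

end aux

section aux2
variable {W : Type*} {T : SimpleGraph W} [DecidableEq W] {v a b x y : W}

/-- Prefix of a path up to an interior vertex, transferred into `deleteVert`. -/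
lemma reach_of_mem_takeUntil {p : T.Walk a b} (hp : p.IsPath) (hy : x ∈ p.support)
    (hxb : x ≠ b) : (deleteVert T b).Reachable a x :=
  walk_transfer (p.takeUntil x hy) (end_not_mem_takeUntil hp hy hxb)

end aux2

section char
variable {W : Type*} {T : SimpleGraph W} [DecidableEq W] {v a b x y : W}

lemma support_mapLe {G G' : SimpleGraph W} (h : G ≤ G') (p : G.Walk a b) :
    (p.mapLe h).support = p.support := by
  simp only [SimpleGraph.Walk.support_map]
  exact List.map_id _

variable (hT : T.IsTree)

noncomputable def tpath (a b : W) : T.Walk a b := (hT.existsUnique_path a b).choose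

lemma tpath_isPath : (tpath hT a b).IsPath := (hT.existsUnique_path a b).choose_spec.1

lemma tpath_unique {q : T.Walk a b} (hq : q.IsPath) : q = tpath hT a b :=
  (hT.existsUnique_path a b).choose_spec.2 q hq

lemma char (hav : a ≠ v) :
    (deleteVert T v).Reachable a x ↔ v ∉ (tpath hT a x).support := by
  constructor
  · intro h
    by_cases hxv : x = v
    · subst hxv
      exact absurd (reach_deleteVert_self.mp h.symm) hav
    · obtain ⟨q⟩ := h
      have hv : v ∉ q.support := not_mem_support_deleteVert q hav
      have hb : (q.mapLe deleteVert_le).bypass = tpath hT a x :=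
        tpath_unique hT (q.mapLe deleteVert_le).bypass_isPath
      rw [← hb]
      intro hmem
      exact hv (by
        have := (q.mapLe deleteVert_le).support_bypass_subset hmem
        rwa [support_mapLe] at this)
  · intro h
    exact walk_transfer _ h

end char

section key
variable {W : Type*} {T : SimpleGraph W} [DecidableEq W] {v r w : W}

lemma key_step (hT : T.IsTree) (hwv : w ≠ v)
    (hrw : ¬ (deleteVert T v).Reachable r w) :
    ∃ u : W, u ≠ v ∧
      {x | (deleteVert T v).Reachable w x} ⊆
        ({x | ¬ (deleteVert T u).Reachable r x} ∪ {u}) ∧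
      ({x | ¬ (deleteVert T u).Reachable r x} ∪ {u}) ⊆
        (({x | ¬ (deleteVert T v).Reachable r x} ∪ {v}) \ {v}) := by
  set p := tpath hT r w with hp
  have hv : v ∈ p.support := by
    by_contra hvmem
    exact hrw (walk_transfer p hvmem)
  have hvw : v ≠ w := Ne.symm hwv
  have hqp : (p.dropUntil v hv).IsPath := (tpath_isPath hT).dropUntil hv
  obtain ⟨u, hadj, q', hq⟩ := SimpleGraph.Walk.not_nil_iff.mp
    (SimpleGraph.Walk.not_nil_of_ne hvw : ¬ (p.dropUntil v hv).Nil)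
  rw [hq, SimpleGraph.Walk.cons_isPath_iff] at hqp
  have huv : u ≠ v := hadj.ne'
  have h_uw : (deleteVert T v).Reachable u w := walk_transfer q' hqp.2
  have h_ru : ¬ (deleteVert T v).Reachable r u := fun h => hrw (h.trans h_uw)
  have hru_ne : r ≠ u := fun e => h_ru (e ▸ SimpleGraph.Reachable.refl r)
  set W1 := p.takeUntil v hv with hW1
  have hW1path : W1.IsPath := (tpath_isPath hT).takeUntil hv
  have hW1reach : ∀ y, y ∈ W1.support → y ≠ v → (deleteVert T v).Reachable r y := by
    intro y hy hyv
    exact walk_transfer (W1.takeUntil y hy) (end_not_mem_takeUntil hW1path hy hyv)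
  have huW1 : u ∉ W1.support := fun h => h_ru (hW1reach u h huv)
  have hW2path : (W1.concat hadj).IsPath := by
    rw [SimpleGraph.Walk.isPath_def, SimpleGraph.Walk.support_concat]
    exact List.Nodup.append hW1path.support_nodup (List.nodup_singleton u)
      (by intro y hy1 hy2; rw [List.mem_singleton] at hy2; exact huW1 (hy2 ▸ hy1))
  have hPru : tpath hT r u = W1.concat hadj := (tpath_unique hT hW2path).symm
  have hvPru : v ∈ (tpath hT r u).support := by
    rw [hPru, SimpleGraph.Walk.support_concat]
    exact List.mem_append_left _ W1.end_mem_support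
  refine ⟨u, huv, ?_, ?_⟩
  · intro x hx
    simp only [Set.mem_setOf_eq] at hx
    by_cases hxu : x = u
    · exact Or.inr hxu
    left
    simp only [Set.mem_setOf_eq]
    have hxv : x ≠ v := by
      intro e; subst e
      exact hwv (reach_deleteVert_self.mp hx.symm)
    have hux : (deleteVert T v).Reachable u x := h_uw.trans hx
    have hvPux : v ∉ (tpath hT u x).support := (char hT huv).mp hux
    set big := W1.append (SimpleGraph.Walk.cons hadj (tpath hT u x)) with hbig
    have hbigsup : big.support = W1.support ++ (tpath hT u x).support := by
      rw [hbig, SimpleGraph.Walk.support_append, SimpleGraph.Walk.support_cons]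
      rfl
    have hbigpath : big.IsPath := by
      rw [SimpleGraph.Walk.isPath_def, hbigsup]
      refine List.Nodup.append hW1path.support_nodup (tpath_isPath hT).support_nodup ?_
      intro y hy1 hy2
      by_cases hyv : y = v
      · subst hyv; exact hvPux hy2
      · have h1 := hW1reach y hy1 hyv
        have h2 : (deleteVert T v).Reachable u y :=
          walk_transfer ((tpath hT u x).takeUntil y hy2)
            (fun hmem => hvPux (SimpleGraph.Walk.support_takeUntil_subset _ hy2 hmem))
        exact h_ru (h1.trans h2.symm)
    have hbigu : u ∈ big.support := by
      rw [hbigsup]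
      exact List.mem_append_right _ (tpath hT u x).start_mem_support
    have hbeq : big = tpath hT r x := tpath_unique hT hbigpath
    have huPrx : u ∈ (tpath hT r x).support := hbeq ▸ hbigu
    exact fun h => ((char hT hru_ne).mp h) huPrx
  · intro x hx
    have hxv : x ≠ v := by
      intro e; subst e
      rcases hx with h | h
      · exact h (walk_transfer W1 huW1)
      · exact huv (Set.mem_singleton_iff.mp h).symm
    refine ⟨?_, hxv⟩
    left
    simp only [Set.mem_setOf_eq]
    by_cases hxu : x = u
    · subst hxu; exact h_ru
    have h : ¬ (deleteVert T u).Reachable r x := by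
      rcases hx with h | h
      · exact h
      · exact absurd (Set.mem_singleton_iff.mp h) hxu
    by_cases hrv : r = v
    · subst hrv
      exact fun hre => hxv (reach_deleteVert_self.mp hre)
    have huPrx : u ∈ (tpath hT r x).support := by
      by_contra hc
      exact h (walk_transfer (tpath hT r x) hc)
    have hteq : (tpath hT r x).takeUntil u huPrx = tpath hT r u :=
      tpath_unique hT ((tpath_isPath hT).takeUntil huPrx)
    have hvtake : v ∈ ((tpath hT r x).takeUntil u huPrx).support := by
      rw [hteq]; exact hvPru
    have hvPrx : v ∈ (tpath hT r x).support :=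
      SimpleGraph.Walk.support_takeUntil_subset _ huPrx hvtake
    exact fun hre => ((char hT hrv).mp hre) hvPrx

end key

theorem stmt_10 {W : Type*} [Fintype W] (T : SimpleGraph W) (hT : T.IsTree)
    (n : ℕ) (hn : Fintype.card W = n) (hn1 : 1 ≤ n) (r : W) (k : ℝ)
    (hk1 : 1 ≤ k) (hkn : k ≤ (n : ℝ)) :
    ∃ v : W,
      (∀ w : W, w ≠ v → ¬ (deleteVert T v).Reachable r w →
        ({x : W | (deleteVert T v).Reachable w x}.ncard : ℝ) ≤ k) ∧
      (v = r ∨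
        k < (({x : W | ¬ (deleteVert T v).Reachable r x} ∪ {v}).ncard : ℝ)) := by
  classical
  let A : W → Set W := fun v => {x | ¬ (deleteVert T v).Reachable r x} ∪ {v}
  let S : Finset W := Finset.univ.filter (fun v => v = r ∨ k < ((A v).ncard : ℝ))
  have hrS : r ∈ S := by simp [S]
  obtain ⟨v, hvS, hmin⟩ := S.exists_min_image (fun v => (A v).ncard) ⟨r, hrS⟩
  have hvS' : v = r ∨ k < ((A v).ncard : ℝ) := by
    simpa [S] using hvS
  refine ⟨v, ?_, hvS'⟩
  intro w hwv hrw
  by_contra hcon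
  push_neg at hcon
  obtain ⟨u, huv, hCAu, hAuAv⟩ := key_step hT hwv hrw
  have h1 : ({x : W | (deleteVert T v).Reachable w x}.ncard : ℝ) ≤ ((A u).ncard : ℝ) := by
    exact_mod_cast Set.ncard_le_ncard hCAu (Set.toFinite _)
  have hsub : A u ⊆ A v := hAuAv.trans Set.diff_subset
  have hvAu : v ∉ A u := fun h => (hAuAv h).2 rfl
  have hvAv : v ∈ A v := Or.inr rfl
  have hssub : A u ⊂ A v := hsub.ssubset_of_ne (fun e => hvAu (e ▸ hvAv))
  have h2 : (A u).ncard < (A v).ncard := Set.ncard_lt_ncard hssub (Set.toFinite _)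
  have huS : u ∈ S := by
    simp only [S, Finset.mem_filter]
    exact ⟨Finset.mem_univ _, Or.inr (lt_of_lt_of_le hcon h1)⟩
  have := hmin u huS
  omega
end
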